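/- Let i < min{j, k} be integers in Z_{2^n}, and define mu_i(j,k) = ((NOT i) AND (j OR k)) OR (j AND k). Then l*_i(mu_i(j,k)) = l*_i(max{j,k}), where l*_i(h) = max{ l : i_(l)=0 and h_(l)=1 } for h > i. -/

import Mathlib

/-- `IsLstar a b l` says that `l` is the most significant bit position where
`b` has a `1` and `a` has a `0`, i.e. `l = l*_a(b)`. -/
def IsLstar (a b l : ℕ) : Prop :=
  a.testBit l = false ∧ b.testBit l = true ∧
    ∀ m, l < m → ¬(a.testBit m = false ∧ b.testBit m = true)

/-- For `a < b` there is a topmost bit where they differ; there `a` has `0`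
and `b` has `1`, and above it all bits agree. -/
lemma top_diff {a b : ℕ} (h : a < b) :
    ∃ L, a.testBit L = false ∧ b.testBit L = true ∧
      ∀ m, L < m → a.testBit m = b.testBit m := by
  have hne : a ^^^ b ≠ 0 := by
    intro h0
    have := xor_eq_zero_iff.mp h0
    omega
  obtain ⟨L, hL, hL'⟩ := Nat.exists_most_significant_bit hne
  have hag : ∀ m, L < m → a.testBit m = b.testBit m := by
    intro m hm
    have := hL' m hm
    simp [Nat.testBit_xor] at this
    exact this
  rw [Nat.testBit_xor] at hL
  rcases ha : a.testBit L with _ | _ <;> rcases hb : b.testBit L with _ | _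
  · rw [ha, hb] at hL; simp at hL
  · exact ⟨L, ha, hb, hag⟩
  · exfalso
    have : b < a := Nat.lt_of_testBit L hb ha (fun m hm => (hag m hm).symm)
    omega
  · rw [ha, hb] at hL; simp at hL

lemma lstar_unique {a b l l' : ℕ} (h : IsLstar a b l) (h' : IsLstar a b l') :
    l = l' := by
  rcases h with ⟨h1, h2, h3⟩
  rcases h' with ⟨h1', h2', h3'⟩
  rcases lt_trichotomy l l' with hlt | heq | hgt
  · exact absurd ⟨h1', h2'⟩ (h3 _ hlt)
  · exact heq
  · exact absurd ⟨h1, h2⟩ (h3' _ hgt)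

lemma key (n i j k : ℕ) (hj : j < 2 ^ n) (hk : k < 2 ^ n)
    (hij : i < j) (hik : i < k) (hjk : j ≤ k) :
    (((2 ^ n - 1) ^^^ i) &&& (j ||| k)) ||| (j &&& k) > i ∧
    ∀ l, IsLstar i ((((2 ^ n - 1) ^^^ i) &&& (j ||| k)) ||| (j &&& k)) l ↔
      IsLstar i k l := by
  set μ := (((2 ^ n - 1) ^^^ i) &&& (j ||| k)) ||| (j &&& k) with hμ
  obtain ⟨L, hiL, hkL, hagL⟩ := top_diff hik
  -- bits of j and k agree above L
  have hjkag : ∀ m, L < m → j.testBit m = k.testBit m := by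
    rcases eq_or_lt_of_le hjk with rfl | hjk'
    · intro m _; rfl
    obtain ⟨D, hjD, hkD, hagD⟩ := top_diff hjk'
    have hDL : D ≤ L := by
      by_contra hDL
      push_neg at hDL
      have hiD : i.testBit D = true := by rw [hagL D hDL, hkD]
      -- i and j differ at D (i has 1, j has 0); find top diff of i,j
      obtain ⟨T, hiT, hjT, hagT⟩ := top_diff hij
      have hDT : D < T := by
        rcases lt_trichotomy D T with h | rfl | h
        · exact h
        · rw [hiD] at hiT; simp at hiT
        · have := hagT D h; rw [hiD, hjD] at this; simp at this
      have hkT : k.testBit T = false := by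
        rw [← hagL T (by omega), hiT]
      have := hagD T hDT
      rw [hjT, hkT] at this
      simp at this
    intro m hm
    exact hagD m (lt_of_le_of_lt hDL hm)
  -- for m ≥ n all bits of j, k vanish
  have hjn : ∀ m, n ≤ m → j.testBit m = false := fun m hm =>
    Nat.testBit_eq_false_of_lt (lt_of_lt_of_le hj (Nat.pow_le_pow_right (by norm_num) hm))
  have hkn : ∀ m, n ≤ m → k.testBit m = false := fun m hm =>
    Nat.testBit_eq_false_of_lt (lt_of_lt_of_le hk (Nat.pow_le_pow_right (by norm_num) hm))
  -- bit formula for μ when i's bit is 0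
  have hμ0 : ∀ m, i.testBit m = false → μ.testBit m = (j.testBit m || k.testBit m) := by
    intro m him
    by_cases hmn : m < n
    · simp [hμ, Nat.testBit_or, Nat.testBit_and, Nat.testBit_xor, him, hmn]
      cases j.testBit m <;> cases k.testBit m <;> simp
    · push_neg at hmn
      simp [hμ, Nat.testBit_or, Nat.testBit_and, hjn m hmn, hkn m hmn]
  -- bit formula for μ when i's bit is 1
  have hμ1 : ∀ m, i.testBit m = true → μ.testBit m = (j.testBit m && k.testBit m) := by
    intro m him
    by_cases hmn : m < n
    · simp [hμ, Nat.testBit_or, Nat.testBit_and, Nat.testBit_xor, him, hmn]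
    · push_neg at hmn
      simp [hμ, Nat.testBit_or, Nat.testBit_and, hjn m hmn, hkn m hmn]
  -- above L, μ agrees with i
  have hμag : ∀ m, L < m → i.testBit m = μ.testBit m := by
    intro m hm
    rcases him : i.testBit m with _ | _
    · rw [hμ0 m him, hjkag m hm, ← hagL m hm, him, Bool.or_self]
    · rw [hμ1 m him, hjkag m hm, ← hagL m hm, him, Bool.and_self]
  have hμL : μ.testBit L = true := by
    rw [hμ0 L hiL, hkL, Bool.or_true]
  have hlt : i < μ := Nat.lt_of_testBit L hiL hμL hμag
  refine ⟨hlt, fun l => ?_⟩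
  have hμstar : IsLstar i μ L :=
    ⟨hiL, hμL, fun m hm ⟨h1, h2⟩ => by rw [hμag m hm, h2] at h1; simp at h1⟩
  have hkstar : IsLstar i k L :=
    ⟨hiL, hkL, fun m hm ⟨h1, h2⟩ => by rw [hagL m hm, h2] at h1; simp at h1⟩
  constructor
  · intro h; rwa [lstar_unique h hμstar]
  · intro h; rwa [lstar_unique h hkstar]

theorem lstar_mu (n i j k : ℕ) (hj : j < 2 ^ n) (hk : k < 2 ^ n)
    (hij : i < j) (hik : i < k) :
    (((2 ^ n - 1) ^^^ i) &&& (j ||| k)) ||| (j &&& k) > i ∧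
    ∀ l, IsLstar i ((((2 ^ n - 1) ^^^ i) &&& (j ||| k)) ||| (j &&& k)) l ↔
      IsLstar i (max j k) l := by
  rcases le_total j k with h | h
  · rw [max_eq_right h]
    exact key n i j k hj hk hij hik h
  · rw [max_eq_left h, Nat.lor_comm j k, Nat.land_comm j k]
    exact key n i k j hk hj hik hij h
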